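/- Let S be a finite truncation set and let ℚ_S denote the localization of ℤ inverting all primes that lie in S. For every commutative ring A, the inclusion X_S(A) ⊆ A^S induces an isomorphism of ℚ_S-modules X_S(A) ⊗_ℤ ℚ_S ≅ A^S ⊗_ℤ ℚ_S. -/

import Mathlib

/-- `S/n = {ν : νn ∈ S}`. -/
def truncDiv (S : Set ℕ) (n : ℕ) : Set ℕ := {ν | ν * n ∈ S}

/-- A truncation set: a nonempty set of positive integers closed under
taking positive divisors. -/
def IsTruncationSet (S : Set ℕ) : Prop :=
  S.Nonempty ∧ (∀ n ∈ S, 0 < n) ∧ ∀ n ∈ S, ∀ d : ℕ, d ∣ n → 0 < d → d ∈ S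

/-- Verschiebung `V_n : A^{S/n} → A^S`. -/
def Versch {A : Type*} [CommRing A] (S : Set ℕ) (n : ℕ)
    (a : truncDiv S n → A) : S → A :=
  fun μ =>
    if h : n ∣ μ.1 then
      (n : A) * a ⟨μ.1 / n, show μ.1 / n * n ∈ S by
        rw [Nat.div_mul_cancel h]; exact μ.2⟩
    else 0

/-- `X_S(J)` as an additive subgroup of `A^S`: the topological closure
(`A` discrete, `A^S` with the product topology) of the subgroup generated by
the elements `V_n⟨a⟩`, `n ∈ S`, `a ∈ J`. -/
def XSgrp (S : Set ℕ) {A : Type*} [CommRing A] (J : Set A) :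
    AddSubgroup (S → A) :=
  letI : TopologicalSpace A := ⊥
  haveI : DiscreteTopology A := ⟨rfl⟩
  (AddSubgroup.closure
    {x | ∃ n ∈ S, ∃ a ∈ J, x = Versch S n fun ν => a ^ ν.1}).topologicalClosure

/-- `ℚ_S`: the localization of `ℤ` inverting all primes lying in `S`. -/
abbrev QS (S : Set ℕ) : Type :=
  Localization (Submonoid.closure {x : ℤ | ∃ p ∈ S, Nat.Prime p ∧ x = (p : ℤ)})

/-! ### Auxiliary material -/

abbrev Mpr (S : Set ℕ) : Submonoid ℤ :=
  Submonoid.closure {x : ℤ | ∃ p ∈ S, Nat.Prime p ∧ x = (p : ℤ)}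

/-- The subgroup generated by the Verschiebung elements. -/
def Gsub (S : Set ℕ) (A : Type*) [CommRing A] : AddSubgroup (S → A) :=
  AddSubgroup.closure
    {x | ∃ n ∈ S, ∃ a ∈ (Set.univ : Set A), x = Versch S n fun ν => a ^ ν.1}

lemma cast_mem_Mpr {S : Set ℕ} (hS : IsTruncationSet S) {μ : ℕ} (hμ : μ ∈ S) :
    (μ : ℤ) ∈ Mpr S := by
  have hpos : 0 < μ := hS.2.1 μ hμ
  have h1 : μ.primeFactorsList.prod = μ := Nat.prod_primeFactorsList hpos.ne'
  have h2 : (μ : ℤ) = (μ.primeFactorsList.map (Nat.cast : ℕ → ℤ)).prod := by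
    conv_lhs => rw [← h1]
    rw [Nat.cast_list_prod]
  rw [h2]
  refine Submonoid.list_prod_mem _ ?_
  intro x hx
  obtain ⟨p, hp, rfl⟩ := List.mem_map.mp hx
  have hprime : p.Prime := Nat.prime_of_mem_primeFactorsList hp
  have hdvd : p ∣ μ := Nat.dvd_of_mem_primeFactorsList hp
  exact Submonoid.subset_closure ⟨p, hS.2.2 μ hμ p hdvd hprime.pos, hprime, rfl⟩

section
variable {A : Type*} [CommRing A] {S : Set ℕ}

lemma versch_eq_sum [Fintype ↥S] {μ : ℕ} (a : A) :
    Versch S μ (fun ν => a ^ ν.1) =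
      ∑ ν ∈ Finset.univ.filter (fun ν : ↥S => μ ∣ ν.1),
        (μ : ℤ) • Pi.single ν (a ^ (ν.1 / μ)) := by
  funext x
  rw [Finset.sum_apply]
  simp only [Pi.smul_apply, Pi.single_apply, smul_ite, smul_zero]
  rw [Finset.sum_ite_eq]
  simp only [Finset.mem_filter, Finset.mem_univ, true_and]
  unfold Versch
  split_ifs with h
  · simp [zsmul_eq_mul]
  · rfl

end

section
variable {A : Type*} [CommRing A] {S : Set ℕ}

lemma mul_smul_single_mem {N : ℕ} {i : ↥S}
    (h : ∀ a : A, (N : ℤ) • Pi.single i a ∈ Gsub S A) (k : ℕ) (a : A) :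
    ((k * N : ℕ) : ℤ) • Pi.single i a ∈ Gsub S A := by
  have : ((k * N : ℕ) : ℤ) • Pi.single i a
      = (N : ℤ) • (Pi.single i ((k : ℤ) • a) : ↥S → A) := by
    rw [Pi.single_smul, smul_smul]
    push_cast
    ring_nf
  rw [this]
  exact h _

lemma keyB [Fintype ↥S] (hS : IsTruncationSet S) :
    ∀ n : ℕ, ∀ μ : ℕ, ∀ hμ : μ ∈ S,
      (Finset.univ.filter (fun ν : ↥S => μ ∣ ν.1)).card ≤ n →
      ∃ N : ℕ, (N : ℤ) ∈ Mpr S ∧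
        ∀ a : A, (N : ℤ) • Pi.single (⟨μ, hμ⟩ : ↥S) a ∈ Gsub S A := by
  intro n
  induction n with
  | zero =>
    intro μ hμ hcard
    exfalso
    have : (⟨μ, hμ⟩ : ↥S) ∈ Finset.univ.filter (fun ν : ↥S => μ ∣ ν.1) := by
      simp
    have := Finset.card_pos.mpr ⟨_, this⟩
    omega
  | succ n IH =>
    intro μ hμ hcard
    have hpos : 0 < μ := hS.2.1 μ hμ
    set μS : ↥S := ⟨μ, hμ⟩ with hμS
    set F : Finset ↥S := Finset.univ.filter (fun ν : ↥S => μ ∣ ν.1) with hF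
    have hμF : μS ∈ F := by simp [hF, hμS]
    set T : Finset ↥S := F.erase μS with hT
    -- induction hypothesis applies to every ν ∈ T
    have hIH : ∀ ν : ↥S, ν ∈ T → ∃ N : ℕ, (N : ℤ) ∈ Mpr S ∧
        ∀ a : A, (N : ℤ) • Pi.single ν a ∈ Gsub S A := by
      intro ν hν
      obtain ⟨hne, hνF⟩ := Finset.mem_erase.mp hν
      have hμν : μ ∣ ν.1 := (Finset.mem_filter.mp hνF).2
      have hsub : Finset.univ.filter (fun ρ : ↥S => ν.1 ∣ ρ.1) ⊆ T := by
        intro ρ hρ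
        have hνρ : ν.1 ∣ ρ.1 := (Finset.mem_filter.mp hρ).2
        refine Finset.mem_erase.mpr ⟨?_, ?_⟩
        · rintro rfl
          exact hne (Subtype.ext (Nat.dvd_antisymm hνρ hμν))
        · exact Finset.mem_filter.mpr ⟨Finset.mem_univ _, hμν.trans hνρ⟩
      have hc : (Finset.univ.filter (fun ρ : ↥S => ν.1 ∣ ρ.1)).card ≤ n := by
        have h1 := Finset.card_le_card hsub
        have h2 : T.card = F.card - 1 := Finset.card_erase_of_mem hμF
        omega
      have := IH ν.1 ν.2 hc
      simpa using this
    choose! f hf1 hf2 using hIH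
    refine ⟨μ * ∏ ν ∈ T, f ν, ?_, ?_⟩
    · push_cast
      exact mul_mem (cast_mem_Mpr hS hμ)
        (Submonoid.prod_mem _ fun ν hν => hf1 ν hν)
    · intro a
      set P : ℕ := ∏ ν ∈ T, f ν with hP
      -- the Verschiebung element
      have hV : Versch S μ (fun ν => a ^ ν.1) ∈ Gsub S A :=
        AddSubgroup.subset_closure ⟨μ, hμ, a, Set.mem_univ a, rfl⟩
      have hsum := versch_eq_sum (S := S) (μ := μ) a
      have hsplit : (μ : ℤ) • Pi.single μS a
          = Versch S μ (fun ν => a ^ ν.1)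
            - ∑ ν ∈ T, (μ : ℤ) • Pi.single ν (a ^ (ν.1 / μ)) := by
        rw [hsum, ← hF, ← Finset.add_sum_erase F _ hμF]
        simp [hμS, hT, Nat.div_self hpos]
      have key : ((μ * P : ℕ) : ℤ) • Pi.single μS a
          = (P : ℤ) • Versch S μ (fun ν => a ^ ν.1)
            - ∑ ν ∈ T, ((P * μ : ℕ) : ℤ) • Pi.single ν (a ^ (ν.1 / μ)) := by
        push_cast
        rw [mul_comm (μ:ℤ), mul_smul, hsplit, smul_sub, Finset.smul_sum]
        congr 1
        refine Finset.sum_congr rfl fun ν hν => ?_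
        rw [smul_smul]
      rw [key]
      refine sub_mem (zsmul_mem hV _) (AddSubgroup.sum_mem _ fun ν hν => ?_)
      have hdvd : f ν ∣ P := Finset.dvd_prod_of_mem f hν
      obtain ⟨k, hk⟩ := hdvd
      have : P * μ = (k * μ) * f ν := by rw [hk]; ring
      rw [this]
      exact mul_smul_single_mem (hf2 ν hν) (k * μ) _

end

section
variable {A : Type*} [CommRing A] {S : Set ℕ}

lemma keyC (hS : IsTruncationSet S) (hfin : S.Finite) (x : ↥S → A) :
    ∃ N : ℕ, (N : ℤ) ∈ Mpr S ∧ (N : ℤ) • x ∈ Gsub S A := by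
  haveI := hfin.fintype
  have H : ∀ μ : ↥S, ∃ N : ℕ, (N : ℤ) ∈ Mpr S ∧
      ∀ a : A, (N : ℤ) • Pi.single μ a ∈ Gsub S A := by
    intro μ
    have := keyB (A := A) hS (Finset.univ.card)
      μ.1 μ.2 (Finset.card_le_card (Finset.subset_univ _))
    simpa using this
  choose f hf1 hf2 using H
  refine ⟨∏ μ : ↥S, f μ, by push_cast; exact Submonoid.prod_mem _ fun μ _ => hf1 μ, ?_⟩
  have hx : x = ∑ μ : ↥S, Pi.single μ (x μ) := (Finset.univ_sum_single x).symm
  rw [hx, Finset.smul_sum]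
  refine AddSubgroup.sum_mem _ fun μ _ => ?_
  have hdvd : f μ ∣ ∏ ν : ↥S, f ν := Finset.dvd_prod_of_mem f (Finset.mem_univ μ)
  obtain ⟨k, hk⟩ := hdvd
  rw [hk, mul_comm]
  exact mul_smul_single_mem (hf2 μ) k _

lemma XSgrp_eq (hfin : S.Finite) :
    XSgrp S (Set.univ : Set A) = Gsub S A := by
  haveI : Finite ↥S := hfin.to_subtype
  unfold XSgrp Gsub
  letI : TopologicalSpace A := ⊥
  haveI : DiscreteTopology A := ⟨rfl⟩
  haveI : DiscreteTopology (↥S → A) := inferInstance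
  refine le_antisymm ?_ (AddSubgroup.le_topologicalClosure _)
  intro x hx
  have : IsClosed ((AddSubgroup.closure
      {x : ↥S → A | ∃ n ∈ S, ∃ a ∈ (Set.univ : Set A),
        x = Versch S n fun ν => a ^ ν.1} : AddSubgroup (↥S → A)) : Set (↥S → A)) :=
    isClosed_discrete _
  have hx' : x ∈ closure ((AddSubgroup.closure
      {x : ↥S → A | ∃ n ∈ S, ∃ a ∈ (Set.univ : Set A),
        x = Versch S n fun ν => a ^ ν.1} : AddSubgroup (↥S → A)) : Set (↥S → A)) := hx
  rw [this.closure_eq] at hx'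
  exact hx'

end


set_option maxHeartbeats 1000000 in
set_option synthInstance.maxHeartbeats 200000 in
/-- For a finite truncation set `S` and any commutative ring `A`, the
inclusion `X_S(A) ⊆ A^S` induces an isomorphism
`X_S(A) ⊗_ℤ ℚ_S ≅ A^S ⊗_ℤ ℚ_S`. -/
theorem statement2 {A : Type*} [CommRing A] (S : Set ℕ)
    (hS : IsTruncationSet S) (hfin : S.Finite) :
    Function.Bijective
      (LinearMap.rTensor (QS S)
        ((XSgrp S (Set.univ : Set A)).subtype.toIntLinearMap)) := by
  constructor
  · haveI : Module.Flat ℤ (QS S) := by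
      have h := IsLocalization.flat (QS S) (Mpr S)
      haveI : Unique (Module ℤ (QS S)) := AddCommGroup.uniqueIntModule
      exact (Subsingleton.elim (Algebra.toModule)
        (AddCommGroup.toIntModule (QS S))) ▸ h
    exact Module.Flat.rTensor_preserves_injective_linearMap _
      (fun x y h => Subtype.ext h)
  · intro y
    induction y using TensorProduct.induction_on with
    | zero => exact ⟨0, map_zero _⟩
    | add u v hu hv =>
      obtain ⟨u', hu'⟩ := hu
      obtain ⟨v', hv'⟩ := hv
      exact ⟨u' + v', by rw [map_add, hu', hv']⟩
    | tmul x q =>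
      obtain ⟨N, hNM, hNx⟩ := keyC (A := A) hS hfin x
      rw [← XSgrp_eq hfin] at hNx
      set u : QS S := IsLocalization.mk' (QS S) (1 : ℤ) (⟨(N : ℤ), hNM⟩ : Mpr S)
        with hu
      have hunit : ((N : ℤ) : QS S) * u = 1 := by
        rw [mul_comm, hu]
        simpa [algebraMap_int_eq, Int.coe_castRingHom] using
          IsLocalization.mk'_spec (QS S) (1 : ℤ) (⟨(N : ℤ), hNM⟩ : Mpr S)
      refine ⟨(⟨(N : ℤ) • x, hNx⟩ : XSgrp S (Set.univ : Set A)) ⊗ₜ[ℤ] (u * q), ?_⟩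
      rw [LinearMap.rTensor_tmul]
      show ((N : ℤ) • x) ⊗ₜ[ℤ] (u * q) = x ⊗ₜ[ℤ] q
      have hq : (N : ℤ) • (u * q) = q := by
        have hz : (N : ℤ) • (u * q) = ((N : ℤ) : QS S) * (u * q) :=
          zsmul_eq_mul _ _
        rw [hz, ← mul_assoc, hunit, one_mul]
      calc ((N : ℤ) • x) ⊗ₜ[ℤ] (u * q)
          = (N : ℤ) • (x ⊗ₜ[ℤ] (u * q)) := (TensorProduct.smul_tmul' _ _ _).symm
        _ = x ⊗ₜ[ℤ] ((N : ℤ) • (u * q)) :=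
            (map_smul (TensorProduct.mk ℤ (↥S → A) (QS S) x) _ _).symm
        _ = x ⊗ₜ[ℤ] q := by rw [hq]
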